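/- Let K be a field with a non-archimedean valuation v with value group Γ, M = ℤⁿ, and let Δ be a pointed Γ-rational polyhedron in ℝⁿ. Then the ideal {f ∈ K[M]^Δ : v_Δ(f) > 0}, where v_Δ(f) = min over vertices ω of Δ of v_ω(f), has minimal primary decomposition given by the prime ideals I_ω = {f ∈ K[M]^Δ : v_ω(f) > 0}, ω ranging over the vertices of Δ. In particular, each I_ω is a prime ideal of K[M]^Δ. -/

import Mathlib

open scoped BigOperators

/-- The `ω`-weight `v_ω(f) = min_{u ∈ supp f} (v(f_u) + ⟨u, ω⟩)` of a Laurent polynomial. -/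
noncomputable def omegaWeight {K : Type*} [Field K] {n : ℕ} (v : K → WithTop ℝ)
    (ω : Fin n → ℝ) (f : AddMonoidAlgebra K (Fin n → ℤ)) : WithTop ℝ :=
  (Finsupp.support f.coeff).inf fun u =>
    v (f.coeff u) + (((∑ i, (u i : ℝ) * ω i) : ℝ) : WithTop ℝ)

/-- A `Γ`-rational polyhedron in `ℝⁿ`, where `Γ` is the value group of `v`: a finite
intersection of halfspaces `{ω : ⟨u,ω⟩ + c ≥ 0}` with `u ∈ ℤⁿ` and `c ∈ Γ`. -/
def IsGRatPolyhedron {K : Type*} [Field K] {n : ℕ} (v : K → WithTop ℝ)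
    (Δ : Set (Fin n → ℝ)) : Prop :=
  ∃ (N : ℕ) (u : Fin N → (Fin n → ℤ)) (c : Fin N → ℝ),
    (∀ i, ∃ α : K, v α = (c i : WithTop ℝ)) ∧
    Δ = {ω | ∀ i, 0 ≤ (∑ j, (u i j : ℝ) * ω j) + c i}

/-- A set is pointed if it contains no affine line. -/
def IsPointedSet {n : ℕ} (Δ : Set (Fin n → ℝ)) : Prop :=
  ∀ p d : Fin n → ℝ, d ≠ 0 → ¬ ∀ t : ℝ, p + t • d ∈ Δ

/-- `K[M]^Δ` as a subset of the Laurent polynomial ring. -/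
def polApproxRing {K : Type*} [Field K] {n : ℕ} (v : K → WithTop ℝ)
    (Δ : Set (Fin n → ℝ)) : Set (AddMonoidAlgebra K (Fin n → ℤ)) :=
  {f | ∀ ω ∈ Δ, (0 : WithTop ℝ) ≤ omegaWeight v ω f}

/-- The ideal `I_ω = {f ∈ K[M]^Δ : v_ω(f) > 0}` of `K[M]^Δ`. -/
def vertexIdeal {K : Type*} [Field K] {n : ℕ} (v : K → WithTop ℝ)
    (Δ : Set (Fin n → ℝ)) (ω : Fin n → ℝ) : Set (AddMonoidAlgebra K (Fin n → ℤ)) :=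
  {f | f ∈ polApproxRing v Δ ∧ (0 : WithTop ℝ) < omegaWeight v ω f}

/- ----------------------------------------------------------------
   Auxiliary lemmas
----------------------------------------------------------------- -/

instance auxWF {n : ℕ} : WellFoundedLT (Fin n) := Finite.to_wellFoundedLT

noncomputable instance auxLexGrp {n : ℕ} : IsOrderedCancelAddMonoid (Lex (Fin n → ℤ)) :=
  inferInstance

section Aux
variable {K : Type*} [Field K] {n : ℕ} (v : K → WithTop ℝ)
    (hv0 : ∀ α : K, v α = ⊤ ↔ α = 0)
    (hvmul : ∀ α β : K, v (α * β) = v α + v β)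
    (hvadd : ∀ α β : K, min (v α) (v β) ≤ v (α + β))

include hv0 hvmul in
theorem myv_one : v 1 = 0 := by
  have h := hvmul 1 1
  rw [mul_one] at h
  have hne : v 1 ≠ ⊤ := fun ht => one_ne_zero ((hv0 1).1 ht)
  lift v 1 to ℝ using hne with a ha
  rw [← WithTop.coe_add, WithTop.coe_eq_coe] at h
  norm_num [show a = 0 by linarith]

include hv0 hvmul in
theorem myv_neg (α : K) : v (-α) = v α := by
  have h1 : v (-1 : K) = 0 := by
    have h := hvmul (-1) (-1)
    rw [neg_mul_neg, one_mul, myv_one v hv0 hvmul] at h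
    have hne : v (-1 : K) ≠ ⊤ := fun ht =>
      (neg_ne_zero.2 (one_ne_zero : (1:K) ≠ 0)) ((hv0 _).1 ht)
    lift v (-1 : K) to ℝ using hne with a ha
    rw [← WithTop.coe_add, ← WithTop.coe_zero, WithTop.coe_eq_coe] at h
    rw [← WithTop.coe_zero, WithTop.coe_eq_coe]
    linarith
  calc v (-α) = v ((-1) * α) := by rw [neg_one_mul]
  _ = v α := by rw [hvmul, h1, zero_add]

include hv0 hvmul hvadd in
theorem myv_add_eq {α β : K} (h : v α < v β) : v (α + β) = v α := by
  refine le_antisymm ?_ ?_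
  · by_contra hlt
    push_neg at hlt
    have h2 : α = (α + β) + (-β) := by ring
    have h3 := hvadd (α + β) (-β)
    rw [← h2, myv_neg v hv0 hvmul] at h3
    exact absurd h3 (not_le.2 (lt_min hlt h))
  · exact le_trans (le_of_eq (min_eq_left h.le).symm) (hvadd α β)

include hv0 in
theorem myv_zero : v 0 = ⊤ := (hv0 0).2 rfl

include hv0 hvmul in
theorem myv_prod {ι : Type*} (s : Finset ι) (h : ι → K) :
    v (∏ i ∈ s, h i) = ∑ i ∈ s, v (h i) := by
  classical
  induction s using Finset.induction with
  | empty => simp [myv_one v hv0 hvmul]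
  | insert _ _ hx ih =>
    rename_i a s
    rw [Finset.prod_insert hx, Finset.sum_insert hx, hvmul, ih]

include hv0 hvadd in
theorem myv_sum_ge {ι : Type*} (s : Finset ι) (h : ι → K) :
    (s.inf fun i => v (h i)) ≤ v (∑ i ∈ s, h i) := by
  classical
  induction s using Finset.induction with
  | empty => simp [myv_zero v hv0]
  | insert _ _ hx ih =>
    rename_i a s
    rw [Finset.sum_insert hx, Finset.inf_insert]
    exact le_trans (min_le_min le_rfl ih) (hvadd _ _)

include hv0 hvadd in
theorem myv_sum_ge' {ι : Type*} (s : Finset ι) (h : ι → K) (M c : WithTop ℝ)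
    (H : ∀ i ∈ s, M ≤ v (h i) + c) : M ≤ v (∑ i ∈ s, h i) + c := by
  rcases s.eq_empty_or_nonempty with rfl | hs
  · simp [myv_zero v hv0]
  · obtain ⟨i₀, hi₀, hinf⟩ := Finset.exists_mem_eq_inf s hs fun i => v (h i)
    calc M ≤ v (h i₀) + c := H _ hi₀
    _ ≤ v (∑ i ∈ s, h i) + c :=
      add_le_add_left (hinf ▸ myv_sum_ge v hv0 hvadd s h) c

theorem pairing_add (a b : Fin n → ℤ) (ω : Fin n → ℝ) :
    (∑ i, ((a + b) i : ℝ) * ω i) = (∑ i, (a i : ℝ) * ω i) + (∑ i, (b i : ℝ) * ω i) := by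
  rw [← Finset.sum_add_distrib]
  refine Finset.sum_congr rfl fun i _ => ?_
  push_cast [Pi.add_apply]
  ring

include hv0 in
theorem weight_le (ω : Fin n → ℝ) (f : AddMonoidAlgebra K (Fin n → ℤ)) (u : Fin n → ℤ) :
    omegaWeight v ω f ≤ v (f.coeff u) + (((∑ i, (u i : ℝ) * ω i) : ℝ) : WithTop ℝ) := by
  by_cases hu : u ∈ f.coeff.support
  · exact Finset.inf_le hu
  · rw [Finsupp.notMem_support_iff.1 hu, myv_zero v hv0, top_add]
    exact le_top

include hv0 hvadd in
theorem weight_add (ω : Fin n → ℝ) (f g : AddMonoidAlgebra K (Fin n → ℤ)) :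
    min (omegaWeight v ω f) (omegaWeight v ω g) ≤ omegaWeight v ω (f + g) := by
  apply Finset.le_inf
  intro u _
  rw [AddMonoidAlgebra.coeff_add, Finsupp.add_apply]
  calc min (omegaWeight v ω f) (omegaWeight v ω g)
      ≤ min (v (f.coeff u) + _) (v (g.coeff u) + _) :=
        min_le_min (weight_le v hv0 ω f u) (weight_le v hv0 ω g u)
  _ = min (v (f.coeff u)) (v (g.coeff u)) + _ := min_add_add_right _ _ _
  _ ≤ v (f.coeff u + g.coeff u) + _ := add_le_add_left (hvadd _ _) _

include hv0 hvmul hvadd in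
theorem weight_mul_ge (ω : Fin n → ℝ) (f g : AddMonoidAlgebra K (Fin n → ℤ)) :
    omegaWeight v ω f + omegaWeight v ω g ≤ omegaWeight v ω (f * g) := by
  classical
  apply Finset.le_inf
  intro u _
  rw [AddMonoidAlgebra.mul_apply, Finsupp.sum]
  apply myv_sum_ge' v hv0 hvadd
  intro a ha
  have key : ∀ b ∈ g.coeff.support,
      omegaWeight v ω f + omegaWeight v ω g ≤
        v (if a + b = u then f.coeff a * g.coeff b else 0) +
          (((∑ i, (u i : ℝ) * ω i) : ℝ) : WithTop ℝ) := by
    intro b _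
    by_cases hab : a + b = u
    · rw [if_pos hab, hvmul, ← hab, pairing_add, WithTop.coe_add]
      calc omegaWeight v ω f + omegaWeight v ω g
          ≤ (v (f.coeff a) + _) + (v (g.coeff b) + _) :=
            add_le_add (weight_le v hv0 ω f a) (weight_le v hv0 ω g b)
      _ = v (f.coeff a) + v (g.coeff b) + (_ + _) := by abel
    · rw [if_neg hab, myv_zero v hv0, top_add]; exact le_top
  rw [Finsupp.sum]
  exact myv_sum_ge' v hv0 hvadd _ _ _ _ key

theorem weight_zero (ω : Fin n → ℝ) : omegaWeight v ω (0 : AddMonoidAlgebra K (Fin n → ℤ)) = ⊤ := by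
  simp [omegaWeight]

include hv0 in
theorem weight_ne_top (ω : Fin n → ℝ) (f : AddMonoidAlgebra K (Fin n → ℤ)) (hf : f ≠ 0) :
    omegaWeight v ω f ≠ ⊤ := by
  obtain ⟨u, hu⟩ := Finsupp.support_nonempty_iff.2 (mt AddMonoidAlgebra.coeff_eq_zero.1 hf)
  intro htop
  have h1 : v (f.coeff u) ≠ ⊤ := fun ht => Finsupp.mem_support_iff.1 hu ((hv0 _).1 ht)
  have := weight_le v hv0 ω f u
  rw [htop, top_le_iff] at this
  exact (WithTop.add_ne_top.2 ⟨h1, WithTop.coe_ne_top⟩) this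

include hv0 hvmul hvadd in
theorem weight_mul_le (ω : Fin n → ℝ) (f g : AddMonoidAlgebra K (Fin n → ℤ))
    (hf : f ≠ 0) (hg : g ≠ 0) :
    omegaWeight v ω (f * g) ≤ omegaWeight v ω f + omegaWeight v ω g := by
  classical
  set c : (Fin n → ℤ) → WithTop ℝ := fun u => (((∑ i, (u i : ℝ) * ω i) : ℝ) : WithTop ℝ) with hc
  have hcadd : ∀ a b : Fin n → ℤ, c (a + b) = c a + c b := by
    intro a b
    rw [hc]
    dsimp only
    rw [pairing_add, WithTop.coe_add]
  have hcne : ∀ u, c u ≠ ⊤ := fun u => WithTop.coe_ne_top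
  have hfs : f.coeff.support.Nonempty := Finsupp.support_nonempty_iff.2 (mt AddMonoidAlgebra.coeff_eq_zero.1 hf)
  have hgs : g.coeff.support.Nonempty := Finsupp.support_nonempty_iff.2 (mt AddMonoidAlgebra.coeff_eq_zero.1 hg)
  set Af : Finset (Fin n → ℤ) :=
    f.coeff.support.filter (fun a => v (f.coeff a) + c a = omegaWeight v ω f) with hAfdef
  set Ag : Finset (Fin n → ℤ) :=
    g.coeff.support.filter (fun b => v (g.coeff b) + c b = omegaWeight v ω g) with hAgdef
  have hAfne : Af.Nonempty := by
    obtain ⟨a, ha, hav⟩ := Finset.exists_mem_eq_inf f.coeff.support hfs fun a => v (f.coeff a) + c a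
    exact ⟨a, Finset.mem_filter.2 ⟨ha, hav.symm⟩⟩
  have hAgne : Ag.Nonempty := by
    obtain ⟨b, hb, hbv⟩ := Finset.exists_mem_eq_inf g.coeff.support hgs fun b => v (g.coeff b) + c b
    exact ⟨b, Finset.mem_filter.2 ⟨hb, hbv.symm⟩⟩
  obtain ⟨a₀, ha₀A, ha₀min⟩ :=
    Af.exists_min_image (toLex : (Fin n → ℤ) → Lex (Fin n → ℤ)) hAfne
  obtain ⟨b₀, hb₀A, hb₀min⟩ :=
    Ag.exists_min_image (toLex : (Fin n → ℤ) → Lex (Fin n → ℤ)) hAgne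
  have ha₀s : a₀ ∈ f.coeff.support := (Finset.mem_filter.1 ha₀A).1
  have ha₀w : v (f.coeff a₀) + c a₀ = omegaWeight v ω f := (Finset.mem_filter.1 ha₀A).2
  have hb₀s : b₀ ∈ g.coeff.support := (Finset.mem_filter.1 hb₀A).1
  have hb₀w : v (g.coeff b₀) + c b₀ = omegaWeight v ω g := (Finset.mem_filter.1 hb₀A).2
  have hvfa₀ : v (f.coeff a₀) ≠ ⊤ := fun ht => Finsupp.mem_support_iff.1 ha₀s ((hv0 _).1 ht)
  have hvgb₀ : v (g.coeff b₀) ≠ ⊤ := fun ht => Finsupp.mem_support_iff.1 hb₀s ((hv0 _).1 ht)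
  set u₀ : Fin n → ℤ := a₀ + b₀ with hu₀
  set M : WithTop ℝ := v (f.coeff a₀) + v (g.coeff b₀) with hM
  have hMne : M ≠ ⊤ := WithTop.add_ne_top.2 ⟨hvfa₀, hvgb₀⟩
  set F : (Fin n → ℤ) × (Fin n → ℤ) → K :=
    (fun p => if p.1 + p.2 = u₀ then f.coeff p.1 * g.coeff p.2 else 0) with hF
  set P : Finset ((Fin n → ℤ) × (Fin n → ℤ)) := f.coeff.support ×ˢ g.coeff.support with hP
  have hcoeff : (f * g).coeff u₀ = ∑ p ∈ P, F p := by
    rw [AddMonoidAlgebra.mul_apply]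
    simp only [Finsupp.sum]
    rw [← Finset.sum_product']
  have hp₀P : (a₀, b₀) ∈ P := Finset.mem_product.2 ⟨ha₀s, hb₀s⟩
  have hsplit : (f * g).coeff u₀ = f.coeff a₀ * g.coeff b₀ + ∑ p ∈ P.erase (a₀, b₀), F p := by
    rw [hcoeff, ← Finset.add_sum_erase P F hp₀P]
    congr 1
    rw [hF]
    simp [hu₀]
  have hrest : ∀ p ∈ P.erase (a₀, b₀), M < v (F p) := by
    intro p hp
    obtain ⟨hpne, hpP⟩ := Finset.mem_erase.1 hp
    obtain ⟨hpa, hpb⟩ := Finset.mem_product.1 hpP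
    by_cases hab : p.1 + p.2 = u₀
    · rw [hF]
      dsimp only
      rw [if_pos hab, hvmul]
      have h1 : v (f.coeff a₀) + c a₀ ≤ v (f.coeff p.1) + c p.1 := ha₀w ▸ Finset.inf_le hpa
      have h2 : v (g.coeff b₀) + c b₀ ≤ v (g.coeff p.2) + c p.2 := hb₀w ▸ Finset.inf_le hpb
      have hCsum : c p.1 + c p.2 = c a₀ + c b₀ := by
        rw [← hcadd, ← hcadd, hab]
      have hwfne : v (f.coeff a₀) + c a₀ ≠ ⊤ := WithTop.add_ne_top.2 ⟨hvfa₀, hcne _⟩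
      have hwgne : v (g.coeff b₀) + c b₀ ≠ ⊤ := WithTop.add_ne_top.2 ⟨hvgb₀, hcne _⟩
      have hstrict : (v (f.coeff a₀) + c a₀) + (v (g.coeff b₀) + c b₀)
          < (v (f.coeff p.1) + c p.1) + (v (g.coeff p.2) + c p.2) := by
        rcases h1.lt_or_eq with h1' | h1'
        · exact WithTop.add_lt_add_of_lt_of_le hwgne h1' h2
        rcases h2.lt_or_eq with h2' | h2'
        · exact WithTop.add_lt_add_of_le_of_lt hwfne h1 h2'
        · exfalso
          have hp1A : p.1 ∈ Af :=
            Finset.mem_filter.2 ⟨hpa, h1'.symm.trans ha₀w⟩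
          have hp2A : p.2 ∈ Ag :=
            Finset.mem_filter.2 ⟨hpb, h2'.symm.trans hb₀w⟩
          have hle1 : toLex a₀ ≤ toLex p.1 := ha₀min _ hp1A
          have hle2 : toLex b₀ ≤ toLex p.2 := hb₀min _ hp2A
          have heq : toLex p.1 + toLex p.2 = toLex a₀ + toLex b₀ := by
            rw [← toLex_add, ← toLex_add, hab, hu₀]
          have h11 : p.1 = a₀ := by
            by_contra hne
            have : toLex a₀ < toLex p.1 :=
              lt_of_le_of_ne hle1 fun hx => hne (toLex.injective hx.symm)
            have := add_lt_add_of_lt_of_le this hle2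
            rw [heq] at this
            exact lt_irrefl _ this
          have h22 : p.2 = b₀ := by
            have : a₀ + p.2 = a₀ + b₀ := by rw [← h11, hab, hu₀, h11]
            exact add_left_cancel this
          exact hpne (Prod.ext h11 h22)
      have hfin : M + (c a₀ + c b₀) < (v (f.coeff p.1) + v (g.coeff p.2)) + (c a₀ + c b₀) := by
        calc M + (c a₀ + c b₀) = (v (f.coeff a₀) + c a₀) + (v (g.coeff b₀) + c b₀) := by
              rw [hM]; abel
        _ < (v (f.coeff p.1) + c p.1) + (v (g.coeff p.2) + c p.2) := hstrict
        _ = (v (f.coeff p.1) + v (g.coeff p.2)) + (c p.1 + c p.2) := by abel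
        _ = (v (f.coeff p.1) + v (g.coeff p.2)) + (c a₀ + c b₀) := by rw [hCsum]
      exact (WithTop.add_lt_add_iff_right
        (WithTop.add_ne_top.2 ⟨hcne _, hcne _⟩)).1 hfin
    · rw [hF]
      dsimp only
      rw [if_neg hab, myv_zero v hv0]
      exact lt_top_iff_ne_top.2 hMne
  have hvrest : M < v (∑ p ∈ P.erase (a₀, b₀), F p) := by
    refine lt_of_lt_of_le ?_ (myv_sum_ge v hv0 hvadd _ _)
    exact (Finset.lt_inf_iff (lt_top_iff_ne_top.2 hMne)).2 hrest
  have hvcoeff : v ((f * g).coeff u₀) = M := by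
    rw [hsplit]
    rw [myv_add_eq v hv0 hvmul hvadd (by rw [hvmul]; exact hvrest)]
    exact hvmul _ _
  have hne0 : (f * g).coeff u₀ ≠ 0 := by
    intro h0
    rw [h0, myv_zero v hv0] at hvcoeff
    exact hMne hvcoeff.symm
  calc omegaWeight v ω (f * g) ≤ v ((f * g).coeff u₀) + c u₀ := weight_le v hv0 ω (f * g) u₀
  _ = (v (f.coeff a₀) + v (g.coeff b₀)) + (c a₀ + c b₀) := by rw [hvcoeff, hM, hu₀, hcadd]
  _ = (v (f.coeff a₀) + c a₀) + (v (g.coeff b₀) + c b₀) := by abel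
  _ = omegaWeight v ω f + omegaWeight v ω g := by rw [ha₀w, hb₀w]

omit hv0 in
include hv0 in
theorem weight_single (ω : Fin n → ℝ) (u : Fin n → ℤ) {α : K} (hα : α ≠ 0) :
    omegaWeight v ω (AddMonoidAlgebra.single u α) =
      v α + (((∑ i, (u i : ℝ) * ω i) : ℝ) : WithTop ℝ) := by
  rw [omegaWeight, AddMonoidAlgebra.coeff_single, Finsupp.support_single_ne_zero u hα, Finset.inf_singleton,
    Finsupp.single_eq_same]

include hv0 hvmul in
theorem exists_exposing_monomial {Δ : Set (Fin n → ℝ)} (hΔrat : IsGRatPolyhedron v Δ)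
    {ω₀ : Fin n → ℝ} (hω₀ : ω₀ ∈ Δ.extremePoints ℝ) :
    ∃ f : AddMonoidAlgebra K (Fin n → ℤ),
      (∀ ω ∈ Δ, (0 : WithTop ℝ) ≤ omegaWeight v ω f) ∧
      omegaWeight v ω₀ f = 0 ∧
      ∀ ω ∈ Δ, ω ≠ ω₀ → (0 : WithTop ℝ) < omegaWeight v ω f := by
  classical
  obtain ⟨N, uu, cc, hcc, hΔeq⟩ := hΔrat
  obtain ⟨hω₀Δ, hext⟩ := hω₀
  set ℓ : Fin N → (Fin n → ℝ) → ℝ := fun i ω => (∑ j, (uu i j : ℝ) * ω j) + cc i with hℓ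
  have hΔmem : ∀ ω : Fin n → ℝ, ω ∈ Δ ↔ ∀ i, 0 ≤ ℓ i ω := by
    intro ω
    rw [hΔeq]
    exact Iff.rfl
  set A : Finset (Fin N) := Finset.univ.filter (fun i => ℓ i ω₀ = 0) with hA
  choose αf hαf using hcc
  set α : K := ∏ i ∈ A, αf i with hα
  have hvα : v α = ((∑ i ∈ A, cc i : ℝ) : WithTop ℝ) := by
    rw [hα, myv_prod v hv0 hvmul, Finset.sum_congr rfl fun i _ => hαf i, WithTop.coe_sum]
  have hαne : α ≠ 0 := by
    intro h0
    rw [h0, myv_zero v hv0] at hvα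
    exact WithTop.coe_ne_top hvα.symm
  set uA : Fin n → ℤ := ∑ i ∈ A, uu i with huA
  set f : AddMonoidAlgebra K (Fin n → ℤ) := AddMonoidAlgebra.single uA α with hfdef
  have hpair : ∀ ω : Fin n → ℝ,
      (∑ j, (uA j : ℝ) * ω j) = ∑ i ∈ A, ∑ j, (uu i j : ℝ) * ω j := by
    intro ω
    calc (∑ j, (uA j : ℝ) * ω j) = ∑ j, ∑ i ∈ A, (uu i j : ℝ) * ω j := by
          refine Finset.sum_congr rfl fun j _ => ?_
          rw [huA, Finset.sum_apply]
          push_cast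
          rw [Finset.sum_mul]
    _ = ∑ i ∈ A, ∑ j, (uu i j : ℝ) * ω j := Finset.sum_comm
  have hwω : ∀ ω : Fin n → ℝ,
      omegaWeight v ω f = ((∑ i ∈ A, ℓ i ω : ℝ) : WithTop ℝ) := by
    intro ω
    rw [hfdef, weight_single v hv0 ω uA hαne, hvα, hpair, ← WithTop.coe_add,
      ← Finset.sum_add_distrib]
    congr 1
    refine Finset.sum_congr rfl fun i _ => ?_
    rw [hℓ]
    ring
  have hω₀A : ∀ i ∈ A, ℓ i ω₀ = 0 := fun i hi => (Finset.mem_filter.1 hi).2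
  -- the three required properties
  refine ⟨f, ?_, ?_, ?_⟩
  · intro ω hω
    rw [hwω ω]
    have : (0:ℝ) ≤ ∑ i ∈ A, ℓ i ω :=
      Finset.sum_nonneg fun i _ => (hΔmem ω).1 hω i
    exact_mod_cast this
  · rw [hwω ω₀]
    rw [Finset.sum_eq_zero hω₀A]
    norm_num
  · intro ω hωΔ hωne
    rw [hwω ω]
    have hnonneg : ∀ i ∈ A, (0:ℝ) ≤ ℓ i ω := fun i _ => (hΔmem ω).1 hωΔ i
    have hsumnn : (0:ℝ) ≤ ∑ i ∈ A, ℓ i ω := Finset.sum_nonneg hnonneg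
    rcases lt_or_eq_of_le hsumnn with h | h
    · exact_mod_cast h
    exfalso
    -- all active constraints vanish at ω; construct second point and contradict extremality
    have hzero : ∀ i ∈ A, ℓ i ω = 0 :=
      (Finset.sum_eq_zero_iff_of_nonneg hnonneg).1 h.symm
    -- positivity of inactive constraints at ω₀
    have hpos : ∀ i, i ∉ A → 0 < ℓ i ω₀ := by
      intro i hi
      rcases lt_or_eq_of_le ((hΔmem ω₀).1 hω₀Δ i) with h' | h'
      · exact h'
      · exact absurd (Finset.mem_filter.2 ⟨Finset.mem_univ i, h'.symm⟩) hi
    -- choose a small positive t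
    set ε : Fin N → ℝ := fun i =>
      if ℓ i ω ≤ ℓ i ω₀ then 1 else ℓ i ω₀ / (ℓ i ω - ℓ i ω₀) with hε
    have hεpos : ∀ i, 0 < ε i := by
      intro i
      rw [hε]
      dsimp only
      split_ifs with hif
      · norm_num
      · push_neg at hif
        have hiA : i ∉ A := by
          intro hiA
          rw [hzero i hiA, hω₀A i hiA] at hif
          exact lt_irrefl _ hif
        exact div_pos (hpos i hiA) (by linarith)
    set s : Finset ℝ := insert (1:ℝ) (Finset.univ.image ε) with hs
    have hsne : s.Nonempty := ⟨1, Finset.mem_insert_self _ _⟩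
    set t : ℝ := s.min' hsne with ht
    have htpos : 0 < t := by
      have := s.min'_mem hsne
      rw [← ht] at this
      rw [hs] at this
      rcases Finset.mem_insert.1 this with h' | h'
      · rw [h']; norm_num
      · obtain ⟨i, _, hi⟩ := Finset.mem_image.1 h'
        rw [← hi]; exact hεpos i
    have htle : ∀ i, t ≤ ε i := by
      intro i
      apply Finset.min'_le
      rw [hs]
      exact Finset.mem_insert_of_mem (Finset.mem_image_of_mem ε (Finset.mem_univ i))
    set ω₂ : Fin n → ℝ := ω₀ + t • (ω₀ - ω) with hω₂
    have hlin : ∀ i, ℓ i ω₂ = (1 + t) * ℓ i ω₀ - t * ℓ i ω := by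
      intro i
      rw [hℓ, hω₂]
      dsimp only
      have : (∑ j, (uu i j : ℝ) * (ω₀ j + t * (ω₀ j - ω j)))
          = (1 + t) * (∑ j, (uu i j : ℝ) * ω₀ j) - t * (∑ j, (uu i j : ℝ) * ω j) := by
        rw [Finset.mul_sum, Finset.mul_sum, ← Finset.sum_sub_distrib]
        refine Finset.sum_congr rfl fun j _ => ?_
        ring
      calc (∑ j, (uu i j : ℝ) * (ω₀ + t • (ω₀ - ω)) j) + cc i
          = (∑ j, (uu i j : ℝ) * (ω₀ j + t * (ω₀ j - ω j))) + cc i := by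
            refine congrArg (· + cc i) (Finset.sum_congr rfl fun j _ => ?_)
            simp [Pi.add_apply, Pi.smul_apply, Pi.sub_apply, smul_eq_mul]
      _ = (1 + t) * ((∑ j, (uu i j : ℝ) * ω₀ j) + cc i)
            - t * ((∑ j, (uu i j : ℝ) * ω j) + cc i) := by rw [this]; ring
    have hω₂Δ : ω₂ ∈ Δ := by
      rw [hΔmem]
      intro i
      rw [hlin i]
      by_cases hiA : i ∈ A
      · rw [hzero i hiA, hω₀A i hiA]
        norm_num
      · have h0 : 0 < ℓ i ω₀ := hpos i hiA
        have h1 : 0 ≤ ℓ i ω := (hΔmem ω).1 hωΔ i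
        by_cases hif : ℓ i ω ≤ ℓ i ω₀
        · nlinarith [htpos]
        · push_neg at hif
          have := htle i
          rw [hε] at this
          dsimp only at this
          rw [if_neg (not_le.2 hif)] at this
          have h2 : t * (ℓ i ω - ℓ i ω₀) ≤ ℓ i ω₀ :=
            (le_div_iff₀ (by linarith)).1 this
          linarith
    -- ω₀ lies in the open segment between ω and ω₂
    have hseg : ω₀ ∈ openSegment ℝ ω ω₂ := by
      refine ⟨t / (1 + t), 1 / (1 + t), ?_, ?_, ?_, ?_⟩
      · exact div_pos htpos (by linarith)
      · exact div_pos one_pos (by linarith)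
      · field_simp
        ring
      · funext j
        rw [hω₂]
        simp only [Pi.add_apply, Pi.smul_apply, Pi.sub_apply, smul_eq_mul]
        field_simp
        ring
    exact hωne (hext hωΔ hω₂Δ hseg)

end Aux

theorem stmt6 {K : Type*} [Field K] {n : ℕ}
    (v : K → WithTop ℝ)
    (hv0 : ∀ α : K, v α = ⊤ ↔ α = 0)
    (hvmul : ∀ α β : K, v (α * β) = v α + v β)
    (hvadd : ∀ α β : K, min (v α) (v β) ≤ v (α + β))
    (Δ : Set (Fin n → ℝ))
    (hΔrat : IsGRatPolyhedron v Δ)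
    (hΔpt : IsPointedSet Δ)
    (hΔne : Δ.Nonempty) :
    -- each I_ω is a prime ideal of K[M]^Δ
    (∀ ω ∈ Δ.extremePoints ℝ,
      (∀ f g, f ∈ vertexIdeal v Δ ω → g ∈ vertexIdeal v Δ ω → f + g ∈ vertexIdeal v Δ ω) ∧
      (∀ f g, f ∈ polApproxRing v Δ → g ∈ vertexIdeal v Δ ω → f * g ∈ vertexIdeal v Δ ω) ∧
      (1 : AddMonoidAlgebra K (Fin n → ℤ)) ∉ vertexIdeal v Δ ω ∧
      (∀ f g, f ∈ polApproxRing v Δ → g ∈ polApproxRing v Δ →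
        f * g ∈ vertexIdeal v Δ ω → f ∈ vertexIdeal v Δ ω ∨ g ∈ vertexIdeal v Δ ω)) ∧
    -- the decomposition: {f : v_Δ(f) > 0} is the intersection of the I_ω
    ({f | f ∈ polApproxRing v Δ ∧
        ∀ ω ∈ Δ.extremePoints ℝ, (0 : WithTop ℝ) < omegaWeight v ω f}
      = (⋂ ω ∈ Δ.extremePoints ℝ, vertexIdeal v Δ ω) ∩ polApproxRing v Δ) ∧
    -- minimality: no I_ω is redundant, and the primes are pairwise distinct
    (∀ ω₀ ∈ Δ.extremePoints ℝ,
      ¬ ((⋂ ω ∈ (Δ.extremePoints ℝ) \ {ω₀}, vertexIdeal v Δ ω) ∩ polApproxRing v Δ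
          ⊆ vertexIdeal v Δ ω₀)) ∧
    (∀ ω₁ ∈ Δ.extremePoints ℝ, ∀ ω₂ ∈ Δ.extremePoints ℝ, ω₁ ≠ ω₂ →
      vertexIdeal v Δ ω₁ ≠ vertexIdeal v Δ ω₂) := by
  clear hΔpt hΔne
  refine ⟨?_, ?_, ?_, ?_⟩
  · -- primality
    intro ω hωext
    have hωΔ : ω ∈ Δ := hωext.1
    refine ⟨?_, ?_, ?_, ?_⟩
    · rintro f g ⟨hfR, hfw⟩ ⟨hgR, hgw⟩
      refine ⟨fun ω' hω' => le_trans (le_min (hfR ω' hω') (hgR ω' hω'))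
        (weight_add v hv0 hvadd ω' f g), ?_⟩
      exact lt_of_lt_of_le (lt_min hfw hgw) (weight_add v hv0 hvadd ω f g)
    · rintro f g hfR ⟨hgR, hgw⟩
      refine ⟨fun ω' hω' => ?_, ?_⟩
      · calc (0 : WithTop ℝ) = 0 + 0 := (add_zero 0).symm
        _ ≤ omegaWeight v ω' f + omegaWeight v ω' g :=
          add_le_add (hfR ω' hω') (hgR ω' hω')
        _ ≤ omegaWeight v ω' (f * g) := weight_mul_ge v hv0 hvmul hvadd ω' f g
      · exact lt_of_lt_of_le hgw (le_trans (le_add_of_nonneg_left (hfR ω hωΔ))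
          (weight_mul_ge v hv0 hvmul hvadd ω f g))
    · rintro ⟨-, h1⟩
      have h1w : omegaWeight v ω (1 : AddMonoidAlgebra K (Fin n → ℤ)) = 0 := by
        rw [AddMonoidAlgebra.one_def,
          weight_single v hv0 ω 0 (one_ne_zero : (1:K) ≠ 0), myv_one v hv0 hvmul]
        norm_num
      rw [h1w] at h1
      exact lt_irrefl _ h1
    · rintro f g hfR hgR ⟨-, hw⟩
      by_cases hf : f = 0
      · exact Or.inl ⟨hfR, by rw [hf, weight_zero]; exact lt_top_iff_ne_top.2 (by simp)⟩
      by_cases hg : g = 0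
      · exact Or.inr ⟨hgR, by rw [hg, weight_zero]; exact lt_top_iff_ne_top.2 (by simp)⟩
      by_contra hcon
      push_neg at hcon
      obtain ⟨h1, h2⟩ := hcon
      have hfw : omegaWeight v ω f = 0 :=
        le_antisymm (not_lt.1 fun hlt => h1 ⟨hfR, hlt⟩) (hfR ω hωΔ)
      have hgw : omegaWeight v ω g = 0 :=
        le_antisymm (not_lt.1 fun hlt => h2 ⟨hgR, hlt⟩) (hgR ω hωΔ)
      have hle := weight_mul_le v hv0 hvmul hvadd ω f g hf hg
      rw [hfw, hgw, add_zero] at hle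
      exact absurd hw (not_lt.2 hle)
  · -- the decomposition
    ext f
    simp only [Set.mem_setOf_eq, Set.mem_inter_iff, Set.mem_iInter]
    constructor
    · rintro ⟨hR, hall⟩
      exact ⟨fun ω hω => ⟨hR, hall ω hω⟩, hR⟩
    · rintro ⟨hall, hR⟩
      exact ⟨hR, fun ω hω => (hall ω hω).2⟩
  · -- no vertex ideal is redundant
    intro ω₀ hω₀ hsub
    obtain ⟨f, hfR, hf0, hfpos⟩ := exists_exposing_monomial v hv0 hvmul hΔrat hω₀
    have hfmem : f ∈ (⋂ ω ∈ (Δ.extremePoints ℝ) \ {ω₀}, vertexIdeal v Δ ω) ∩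
        polApproxRing v Δ := by
      refine ⟨Set.mem_iInter₂.2 fun ω hω => ?_, hfR⟩
      exact ⟨hfR, hfpos ω hω.1.1 (by simpa using hω.2)⟩
    have hmem := hsub hfmem
    have := hmem.2
    rw [hf0] at this
    exact lt_irrefl _ this
  · -- distinctness
    intro ω₁ hω₁ ω₂ hω₂ hne heq
    obtain ⟨f, hfR, hf0, hfpos⟩ := exists_exposing_monomial v hv0 hvmul hΔrat hω₂
    have hf1 : f ∈ vertexIdeal v Δ ω₁ := ⟨hfR, hfpos ω₁ hω₁.1 hne⟩
    rw [heq] at hf1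
    have := hf1.2
    rw [hf0] at this
    exact lt_irrefl _ this
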